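/- Let ≡₁ and ≡₂ be two congruences on A* that are K-shuffle compatible (over a commutative semiring K). Then their join ≡₁ ∨ ≡₂ (the smallest congruence containing both) is also K-shuffle compatible. -/

import Mathlib

open TensorProduct

/-- The unshuffle coproduct on the monoid algebra of the free monoid (= `K⟨A⟩`):
the unique algebra morphism (for the concatenation product) sending each letter `a`
to `a ⊗ 1 + 1 ⊗ a`. -/
noncomputable def unshuffle (K A : Type*) [CommSemiring K] :
    MonoidAlgebra K (FreeMonoid A) →ₐ[K]
      MonoidAlgebra K (FreeMonoid A) ⊗[K] MonoidAlgebra K (FreeMonoid A) :=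
  MonoidAlgebra.lift K _ (FreeMonoid A)
    (FreeMonoid.lift fun a =>
      (MonoidAlgebra.of K (FreeMonoid A) (FreeMonoid.of a)) ⊗ₜ[K] 1
        + 1 ⊗ₜ[K] (MonoidAlgebra.of K (FreeMonoid A) (FreeMonoid.of a)))

/-- The word `l` viewed as an element of `K⟨A⟩`. -/
noncomputable def wd {K : Type*} {A : Type*} [CommSemiring K] (l : List A) :
    MonoidAlgebra K (FreeMonoid A) :=
  MonoidAlgebra.of K (FreeMonoid A) (FreeMonoid.ofList l)

/-- `P` is primitive for the unshuffle coproduct: `c(P) = P ⊗ 1 + 1 ⊗ P`. -/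
def IsPrimitive {K A : Type*} [CommSemiring K] (P : MonoidAlgebra K (FreeMonoid A)) : Prop :=
  unshuffle K A P = P ⊗ₜ[K] 1 + 1 ⊗ₜ[K] P

/-- The natural algebra morphism `K⟨A⟩ → K[A*/≡]` induced by a monoid congruence. -/
noncomputable def natHom (K : Type*) {A : Type*} [CommSemiring K] (c : Con (FreeMonoid A)) :
    MonoidAlgebra K (FreeMonoid A) →ₐ[K] MonoidAlgebra K c.Quotient :=
  MonoidAlgebra.mapDomainAlgHom K K c.mk'

/-- A congruence `≡` on `A*` is `K`-shuffle compatible if the unshuffle coproduct descends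
to the quotient, i.e. `u ≡ v` implies `(nat ⊗ nat)(c u) = (nat ⊗ nat)(c v)`. -/
def ShuffleCompat (K : Type*) {A : Type*} [CommSemiring K] (c : Con (FreeMonoid A)) : Prop :=
  ∀ u v : FreeMonoid A, c u v →
    (Algebra.TensorProduct.map (natHom K c) (natHom K c))
        (unshuffle K A (MonoidAlgebra.of K (FreeMonoid A) u))
      = (Algebra.TensorProduct.map (natHom K c) (natHom K c))
        (unshuffle K A (MonoidAlgebra.of K (FreeMonoid A) v))

/-- Auxiliary: the algebra morphism on monoid algebras induced by `Con.map` for `c ≤ d`. -/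
noncomputable def conMapAlgHom {K A : Type*} [CommSemiring K] (c d : Con (FreeMonoid A))
    (h : c ≤ d) : MonoidAlgebra K c.Quotient →ₐ[K] MonoidAlgebra K d.Quotient :=
  MonoidAlgebra.mapDomainAlgHom K K (c.map d h)

/-- Auxiliary: factorization of the quotiented coproduct through a smaller congruence. -/
theorem unshuffle_factor {K A : Type*} [CommSemiring K] (c d : Con (FreeMonoid A)) (h : c ≤ d) :
    (Algebra.TensorProduct.map (natHom K d) (natHom K d)).comp (unshuffle K A)
      = (Algebra.TensorProduct.map (conMapAlgHom c d h) (conMapAlgHom c d h)).comp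
        ((Algebra.TensorProduct.map (natHom K c) (natHom K c)).comp (unshuffle K A)) := by
  refine MonoidAlgebra.algHom_ext' (FreeMonoid.hom_eq fun a => ?_) (Subsingleton.elim _ _)
  simp [unshuffle, natHom, conMapAlgHom, MonoidAlgebra.of_apply, Finsupp.mapDomain_single,
    MonoidAlgebra.one_def, Con.map_apply, Con.lift_coe, Con.coe_mk']
  rfl

/-- Auxiliary: compatibility transfers along `c ≤ d` pointwise. -/
theorem compat_of_le {K A : Type*} [CommSemiring K] {c d : Con (FreeMonoid A)} (h : c ≤ d)
    (hc : ShuffleCompat K c) {u v : FreeMonoid A} (huv : c u v) :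
    (Algebra.TensorProduct.map (natHom K d) (natHom K d))
        (unshuffle K A (MonoidAlgebra.of K (FreeMonoid A) u))
      = (Algebra.TensorProduct.map (natHom K d) (natHom K d))
        (unshuffle K A (MonoidAlgebra.of K (FreeMonoid A) v)) := by
  have hf := unshuffle_factor (K := K) c d h
  have hu := congrArg (fun f => f (MonoidAlgebra.of K (FreeMonoid A) u)) hf
  have hv := congrArg (fun f => f (MonoidAlgebra.of K (FreeMonoid A) v)) hf
  simp only [AlgHom.coe_comp, Function.comp_apply] at hu hv
  rw [hu, hv, hc u v huv]

/-- the join of two `K`-shuffle compatible congruences on `A*` is again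
`K`-shuffle compatible. -/
theorem shuffleCompat_sup {K A : Type*} [CommSemiring K] (c₁ c₂ : Con (FreeMonoid A))
    (h₁ : ShuffleCompat K c₁) (h₂ : ShuffleCompat K c₂) :
    ShuffleCompat K (c₁ ⊔ c₂) := by
  intro u v huv
  rw [Con.sup_eq_conGen] at huv
  induction huv with
  | of x y hxy =>
    rcases hxy with h | h
    · exact compat_of_le le_sup_left h₁ h
    · exact compat_of_le le_sup_right h₂ h
  | refl => rfl
  | symm _ ih => exact ih.symm
  | trans _ _ ih₁ ih₂ => exact ih₁.trans ih₂
  | mul _ _ ih₁ ih₂ =>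
    simp only [map_mul] at ih₁ ih₂ ⊢
    rw [ih₁, ih₂]
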